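/- (Improved geometry bound, cubic variables) For every positive integer d ≥ 3 and every ε > 0 there exists a constant C = C(d, ε) such that the following holds. Let λ > 0 and X ≥ 1 be real, and let c₁, c₂, c₃ and X₁,…,X_d, Y₁,…,Y_d, Z₁,…,Z_d be positive integers that are admissible for (λ, X). Then B_d(c, X, Y, Z) ≤ C · (X^{λ+ε} / (P₁P₃) + X^{λ−1+ε} · P₃²). -/

import Mathlib

theorem tau_bound (δ : ℝ) (hδ : 0 < δ) :
    ∃ K : ℝ, 1 ≤ K ∧ ∀ n : ℕ, n ≠ 0 → (n.divisors.card : ℝ) ≤ K * (n : ℝ) ^ δ := by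
  set r : ℝ := (2 : ℝ) ^ δ with hr_def
  have hr : 1 < r := Real.one_lt_rpow_iff_of_pos (by norm_num) |>.2 (Or.inl ⟨by norm_num, hδ⟩)
  set κ : ℝ := max 1 (1 / (r - 1)) with hκ_def
  have hκ1 : 1 ≤ κ := le_max_left _ _
  set B : ℕ := ⌈(2 : ℝ) ^ (1 / δ)⌉₊ with hB_def
  refine ⟨κ ^ B, one_le_pow₀ hκ1, ?_⟩
  -- pointwise bound
  have hpt : ∀ e : ℕ, (e + 1 : ℝ) ≤ κ * r ^ e := by
    intro e
    have hbern : 1 + (e : ℝ) * (r - 1) ≤ r ^ e := by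
      have h := one_add_mul_le_pow (a := r - 1) (by linarith) e
      have h0 : (1 : ℝ) + (r - 1) = r := by ring
      rw [h0] at h
      linarith
    have hrpos : (0:ℝ) < r ^ e := by positivity
    rcases le_total (r - 1) 1 with h | h
    · have hκ2 : 1 / (r - 1) ≤ κ := le_max_right _ _
      have hr1 : 0 < r - 1 := by linarith
      have : ((e : ℝ) + 1) * (r - 1) ≤ r ^ e := by nlinarith
      calc (e + 1 : ℝ) = ((e : ℝ) + 1) * (r - 1) * (1 / (r - 1)) := by
            field_simp
        _ ≤ r ^ e * (1 / (r - 1)) := by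
            apply mul_le_mul_of_nonneg_right this (by positivity)
        _ ≤ r ^ e * κ := by
            apply mul_le_mul_of_nonneg_left hκ2 (le_of_lt hrpos)
        _ = κ * r ^ e := by ring
    · have : (e + 1 : ℝ) ≤ r ^ e := by nlinarith
      nlinarith
  intro n hn
  have hcast : (n.divisors.card : ℝ) = ∏ p ∈ n.primeFactors, ((n.factorization p : ℝ) + 1) := by
    rw [Nat.card_divisors hn]
    push_cast
    rfl
  have hself : ∏ p ∈ n.primeFactors, p ^ n.factorization p = n := by
    rw [← Nat.support_factorization]
    exact Nat.factorization_prod_pow_eq_self hn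
  have hnval : (n : ℝ) ^ δ = ∏ p ∈ n.primeFactors, (((p : ℝ)) ^ (n.factorization p)) ^ δ := by
    have h1 : (n : ℝ) = ∏ p ∈ n.primeFactors, ((p : ℝ)) ^ (n.factorization p) := by
      conv_lhs => rw [← hself]
      push_cast
      rfl
    rw [h1, Real.finset_prod_rpow _ _ (fun p _ => by positivity) δ]
  rw [hcast, hnval]
  set S := n.primeFactors.filter (fun p : ℕ => ((p : ℝ)) ^ δ < 2) with hS_def
  have hprime : ∀ p ∈ n.primeFactors, 2 ≤ p := fun p hp => (Nat.prime_of_mem_primeFactors hp).two_le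
  -- pointwise bounds
  have hbig : ∀ p ∈ n.primeFactors, p ∉ S → ((n.factorization p : ℝ) + 1) ≤ (((p:ℝ)) ^ (n.factorization p)) ^ δ := by
    intro p hp hps
    have h2 : (2 : ℝ) ≤ (p : ℝ) ^ δ := by
      by_contra hcon
      exact hps (Finset.mem_filter.2 ⟨hp, by linarith⟩)
    set e := n.factorization p
    have hppos : (0:ℝ) ≤ (p:ℝ) := by positivity
    have heq : (((p:ℝ)) ^ e) ^ δ = ((p:ℝ) ^ δ) ^ e := by
      rw [← Real.rpow_natCast ((p:ℝ) ^ δ) e, ← Real.rpow_mul hppos, mul_comm,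
        Real.rpow_mul hppos, Real.rpow_natCast]
    rw [heq]
    calc ((e : ℝ) + 1) ≤ (2:ℝ) ^ e := by
          have := Nat.lt_two_pow_self (n := e)
          have : (e + 1 : ℕ) ≤ 2 ^ e := this
          calc ((e : ℝ) + 1) = ((e + 1 : ℕ) : ℝ) := by push_cast; ring
            _ ≤ ((2 ^ e : ℕ) : ℝ) := by exact_mod_cast this
            _ = (2:ℝ) ^ e := by push_cast; ring
      _ ≤ ((p:ℝ) ^ δ) ^ e := by
          apply pow_le_pow_left₀ (by norm_num) h2
  have hsmallpt : ∀ p ∈ n.primeFactors, ((n.factorization p : ℝ) + 1) ≤ κ * (((p:ℝ)) ^ (n.factorization p)) ^ δ := by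
    intro p hp
    set e := n.factorization p
    have hppos : (0:ℝ) ≤ (p:ℝ) := by positivity
    have hp2 : (2:ℝ) ≤ (p:ℝ) := by exact_mod_cast hprime p hp
    have heq : (((p:ℝ)) ^ e) ^ δ = ((p:ℝ) ^ δ) ^ e := by
      rw [← Real.rpow_natCast ((p:ℝ) ^ δ) e, ← Real.rpow_mul hppos, mul_comm,
        Real.rpow_mul hppos, Real.rpow_natCast]
    have hge : r ^ e ≤ (((p:ℝ)) ^ e) ^ δ := by
      rw [heq]
      apply pow_le_pow_left₀ (le_of_lt (Real.rpow_pos_of_pos (by norm_num) δ))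
      exact Real.rpow_le_rpow (by norm_num) hp2 (le_of_lt hδ)
    calc ((e : ℝ) + 1) ≤ κ * r ^ e := by
          have := hpt e; push_cast at this ⊢; linarith
      _ ≤ κ * (((p:ℝ)) ^ e) ^ δ := by
          apply mul_le_mul_of_nonneg_left hge (by linarith)
  have hScard : S.card ≤ B := by
    have hsub : S ⊆ Finset.range B := by
      intro p hp
      rw [Finset.mem_range]
      rw [hS_def, Finset.mem_filter] at hp
      obtain ⟨hp1, hp2⟩ := hp
      have hppos : (0:ℝ) ≤ (p:ℝ) := by positivity
      have h3 : (p : ℝ) < (2:ℝ) ^ (1/δ) := by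
        have h4 : ((p:ℝ) ^ δ) ^ (1/δ) < (2:ℝ) ^ (1/δ) :=
          Real.rpow_lt_rpow (Real.rpow_nonneg hppos δ) hp2 (by positivity)
        rwa [← Real.rpow_mul hppos, mul_one_div, div_self (ne_of_gt hδ), Real.rpow_one] at h4
      have h5 : (p : ℝ) < (B : ℝ) := lt_of_lt_of_le h3 (Nat.le_ceil _)
      exact_mod_cast h5
    exact le_trans (Finset.card_le_card hsub) (by simp)
  have hXnn : ∀ p ∈ n.primeFactors, (0:ℝ) ≤ (((p:ℝ)) ^ (n.factorization p)) ^ δ := by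
    intro p _
    positivity
  set T := n.primeFactors.filter (fun p : ℕ => ¬ (((p : ℝ)) ^ δ < 2)) with hT_def
  have hA' : ∏ p ∈ S, ((n.factorization p : ℝ) + 1) ≤ κ ^ B * ∏ p ∈ S, (((p:ℝ)) ^ (n.factorization p)) ^ δ := by
    calc ∏ p ∈ S, ((n.factorization p : ℝ) + 1)
        ≤ ∏ p ∈ S, (κ * (((p:ℝ)) ^ (n.factorization p)) ^ δ) := by
          apply Finset.prod_le_prod
          · intro p _; positivity
          · intro p hp
            exact hsmallpt p (Finset.mem_filter.1 hp).1
      _ = κ ^ S.card * ∏ p ∈ S, (((p:ℝ)) ^ (n.factorization p)) ^ δ := by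
          rw [Finset.prod_mul_distrib, Finset.prod_const]
      _ ≤ κ ^ B * ∏ p ∈ S, (((p:ℝ)) ^ (n.factorization p)) ^ δ := by
          apply mul_le_mul_of_nonneg_right (pow_le_pow_right₀ hκ1 hScard)
          exact Finset.prod_nonneg (fun p hp => hXnn p (Finset.mem_filter.1 hp).1)
  have hB2 : ∏ p ∈ T, ((n.factorization p : ℝ) + 1) ≤ ∏ p ∈ T, (((p:ℝ)) ^ (n.factorization p)) ^ δ := by
    apply Finset.prod_le_prod
    · intro p _; positivity
    · intro p hp
      rw [hT_def, Finset.mem_filter] at hp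
      exact hbig p hp.1 (fun hmem => hp.2 (Finset.mem_filter.1 hmem).2)
  calc ∏ p ∈ n.primeFactors, ((n.factorization p : ℝ) + 1)
      = (∏ p ∈ S, ((n.factorization p : ℝ) + 1)) * ∏ p ∈ T, ((n.factorization p : ℝ) + 1) := by
        rw [hS_def, hT_def, Finset.prod_filter_mul_prod_filter_not]
    _ ≤ (κ ^ B * ∏ p ∈ S, (((p:ℝ)) ^ (n.factorization p)) ^ δ) * ∏ p ∈ T, (((p:ℝ)) ^ (n.factorization p)) ^ δ := by
        apply mul_le_mul hA' hB2
        · exact Finset.prod_nonneg (fun p _ => by positivity)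
        · have : (0:ℝ) ≤ ∏ p ∈ S, (((p:ℝ)) ^ (n.factorization p)) ^ δ :=
            Finset.prod_nonneg (fun p hp => hXnn p (Finset.mem_filter.1 hp).1)
          positivity
    _ = κ ^ B * ((∏ p ∈ S, (((p:ℝ)) ^ (n.factorization p)) ^ δ) * ∏ p ∈ T, (((p:ℝ)) ^ (n.factorization p)) ^ δ) := by
        ring
    _ = κ ^ B * ∏ p ∈ n.primeFactors, (((p:ℝ)) ^ (n.factorization p)) ^ δ := by
        rw [hS_def, hT_def, Finset.prod_filter_mul_prod_filter_not]


-- helper: equal nat-division implies difference below divisor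
theorem div_eq_dist {a b d : ℕ} (hd : 0 < d) (h : a / d = b / d) : a < b + d := by
  have h1 : a = d * (a / d) + a % d := (Nat.div_add_mod a d).symm
  have h2 : d * (b / d) ≤ b := Nat.mul_div_le b d
  have h3 : a % d < d := Nat.mod_lt _ hd
  calc a = d * (a / d) + a % d := h1
    _ = d * (b / d) + a % d := by rw [h]
    _ < d * (b / d) + d := by omega
    _ ≤ b + d := by omega

theorem core_count {T : Type} [DecidableEq T] (F : Finset T)
    (U V W x3 y3 z3 : T → ℕ) (al be ga : ℕ)
    (A Bq Cq : ℕ)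
    (hApos : 0 < A) (hBpos : 0 < Bq) (hCpos : 0 < Cq)
    (hga : 0 < ga)
    (hcop : Nat.Coprime al ga)
    (heq : ∀ t ∈ F, al * U t + be * V t = ga * W t)
    (hUrange : ∀ t ∈ F, A ≤ U t ∧ U t < 16 * A)
    (hVrange : ∀ t ∈ F, Bq ≤ V t ∧ V t < 16 * Bq)
    (hWrange : ∀ t ∈ F, Cq ≤ W t ∧ W t < 16 * Cq)
    (hgcd : ∀ t ∈ F, Nat.gcd (U t) (Nat.gcd (V t) (W t)) = 1)
    (hx3 : ∀ t ∈ F, x3 t ∣ U t) (hy3 : ∀ t ∈ F, y3 t ∣ V t) (hz3 : ∀ t ∈ F, z3 t ∣ W t)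
    (hrec : ∀ t ∈ F, ∀ t' ∈ F, U t = U t' → V t = V t' → W t = W t' →
            x3 t = x3 t' → y3 t = y3 t' → z3 t = z3 t' → t = t')
    (Tb : ℕ)
    (hTb : ∀ t ∈ F, (U t).divisors.card ≤ Tb ∧ (V t).divisors.card ≤ Tb ∧ (W t).divisors.card ≤ Tb) :
    F.card ≤ 16 * (2 * (512 * A * Bq / ga) + 2) * Tb ^ 3 := by
  rcases Finset.eq_empty_or_nonempty F with hF | ⟨t₁, ht₁⟩
  · simp [hF]
  set U₁ := U t₁ with hU₁def
  set V₁ := V t₁ with hV₁def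
  set W₁ := W t₁ with hW₁def
  have hW₁pos : 0 < W₁ := lt_of_lt_of_le hCpos (hWrange t₁ ht₁).1
  have heqz : ∀ t ∈ F, (al:ℤ) * U t + be * V t = ga * W t := by
    intro t ht; exact_mod_cast heq t ht
  have hid1 : ∀ t ∈ F, (al:ℤ) * ((U t:ℤ) * V₁ - V t * U₁)
      = ga * ((W t:ℤ) * V₁ - W₁ * V t) := by
    intro t ht
    have h1 := heqz t ht
    have h2 := heqz t₁ ht₁
    linear_combination (V₁:ℤ) * h1 - (V t:ℤ) * h2
  have hid2 : ∀ t ∈ F, (be:ℤ) * ((V t:ℤ) * U₁ - U t * V₁)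
      = ga * ((W t:ℤ) * U₁ - W₁ * U t) := by
    intro t ht
    have h1 := heqz t ht
    have h2 := heqz t₁ ht₁
    linear_combination (U₁:ℤ) * h1 - (U t:ℤ) * h2
  set R : ℕ := 512 * A * Bq with hRdef
  set key : T → ℤ × ℕ := fun t => ((U t : ℤ) * V₁ - V t * U₁, (W t - Cq) / W₁) with hkeydef
  set 𝒦 : Finset (ℤ × ℕ) :=
    ((Finset.Icc (-(R:ℤ)) (R:ℤ)).filter (fun k => (ga:ℤ) ∣ k)) ×ˢ Finset.range 16 with h𝒦def
  have hganz : (ga:ℤ) ≠ 0 := by exact_mod_cast hga.ne'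
  have hmaps : ∀ t ∈ F, key t ∈ 𝒦 := by
    intro t ht
    have hkt : key t = ((U t : ℤ) * V₁ - V t * U₁, (W t - Cq) / W₁) := rfl
    rw [hkt, h𝒦def, Finset.mem_product]
    constructor
    · rw [Finset.mem_filter, Finset.mem_Icc]
      dsimp only
      have hU := hUrange t ht
      have hV := hVrange t ht
      have hU1 := hUrange t₁ ht₁
      have hV1 := hVrange t₁ ht₁
      have c1 : (U t:ℤ) * V₁ ≤ 256 * A * Bq := by
        have h' : (U t) * V₁ ≤ 256 * A * Bq := by
          calc U t * V₁ ≤ (16 * A) * (16 * Bq) :=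
                Nat.mul_le_mul (le_of_lt hU.2) (le_of_lt (hV1.2))
            _ = 256 * A * Bq := by ring
        exact_mod_cast h' 
      have c2 : (V t:ℤ) * U₁ ≤ 256 * A * Bq := by
        have h' : (V t) * U₁ ≤ 256 * A * Bq := by
          calc V t * U₁ ≤ (16 * Bq) * (16 * A) :=
                Nat.mul_le_mul (le_of_lt hV.2) (le_of_lt (hU1.2))
            _ = 256 * A * Bq := by ring
        exact_mod_cast h' 
      have c3 : (0:ℤ) ≤ (U t:ℤ) * V₁ := by positivity
      have c4 : (0:ℤ) ≤ (V t:ℤ) * U₁ := by positivity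
      have hRcast : ((R:ℕ):ℤ) = 512 * (A:ℤ) * (Bq:ℤ) := by
        rw [hRdef]; push_cast; ring
      refine ⟨⟨by rw [hRcast]; linarith, by rw [hRcast]; linarith⟩, ?_⟩
      · -- divisibility by ga
        have hdal : (ga:ℤ) ∣ (al:ℤ) * ((U t:ℤ) * V₁ - V t * U₁) :=
          ⟨((W t:ℤ) * V₁ - W₁ * V t), hid1 t ht⟩
        have hco : IsCoprime (ga:ℤ) (al:ℤ) := by
          rw [Int.isCoprime_iff_gcd_eq_one, Int.gcd_natCast_natCast]
          exact (Nat.coprime_comm.1 hcop)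
        exact hco.dvd_of_dvd_mul_left hdal
    · rw [Finset.mem_range]
      dsimp only
      have hW := hWrange t ht
      have hW1 : Cq ≤ W₁ := (hWrange t₁ ht₁).1
      have : (W t - Cq) < 16 * W₁ := by omega
      exact Nat.div_lt_iff_lt_mul hW₁pos |>.2 (by omega)
  rw [Finset.card_eq_sum_card_fiberwise hmaps]
  have hfib : ∀ k ∈ 𝒦, (F.filter (fun t => key t = k)).card ≤ Tb ^ 3 := by
    intro k _
    rcases Finset.eq_empty_or_nonempty (F.filter (fun t => key t = k)) with he | ⟨t₀, ht₀⟩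
    · simp [he]
    have ht₀F : t₀ ∈ F := (Finset.mem_filter.1 ht₀).1
    have ht₀k : key t₀ = k := (Finset.mem_filter.1 ht₀).2
    have hsame : ∀ t ∈ F.filter (fun t => key t = k),
        U t = U t₀ ∧ V t = V t₀ ∧ W t = W t₀ := by
      intro t ht
      obtain ⟨htF, htk⟩ := Finset.mem_filter.1 ht
      have hkk : key t = key t₀ := htk.trans ht₀k.symm
      have hm : (U t:ℤ) * V₁ - V t * U₁ = (U t₀:ℤ) * V₁ - V t₀ * U₁ :=
        congrArg Prod.fst hkk
      have hj : (W t - Cq) / W₁ = (W t₀ - Cq) / W₁ := congrArg Prod.snd hkk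
      have h1 := hid1 t htF
      have h1' := hid1 t₀ ht₀F
      have h2 := hid2 t htF
      have h2' := hid2 t₀ ht₀F
      have hcb : ((W t:ℤ) - W t₀) * V₁ = W₁ * ((V t:ℤ) - V t₀) := by
        have hgaeq : (ga:ℤ) * ((W t:ℤ) * V₁ - W₁ * V t)
            = ga * ((W t₀:ℤ) * V₁ - W₁ * V t₀) := by
          rw [← h1, ← h1', hm]
        have := mul_left_cancel₀ hganz hgaeq
        linear_combination this
      have hca : ((W t:ℤ) - W t₀) * U₁ = W₁ * ((U t:ℤ) - U t₀) := by
        have hm' : (V t:ℤ) * U₁ - U t * V₁ = (V t₀:ℤ) * U₁ - U t₀ * V₁ := by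
          linear_combination -hm
        have hgaeq : (ga:ℤ) * ((W t:ℤ) * U₁ - W₁ * U t)
            = ga * ((W t₀:ℤ) * U₁ - W₁ * U t₀) := by
          rw [← h2, ← h2', hm']
        have := mul_left_cancel₀ hganz hgaeq
        linear_combination this
      set cc : ℤ := (W t:ℤ) - W t₀ with hccdef
      have hdvd : (W₁:ℤ) ∣ cc := by
        set g := Nat.gcd V₁ W₁ with hgdef
        have hb1 := Nat.gcd_eq_gcd_ab V₁ W₁
        have hb2 := Nat.gcd_eq_gcd_ab U₁ g
        have hg1 : Nat.gcd U₁ g = 1 := hgcd t₁ ht₁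
        have hcg : (W₁:ℤ) ∣ cc * g :=
          ⟨Nat.gcdA V₁ W₁ * ((V t:ℤ) - V t₀) + Nat.gcdB V₁ W₁ * cc, by
            rw [hgdef]
            linear_combination cc * hb1 + Nat.gcdA V₁ W₁ * hcb⟩
        have hcu : (W₁:ℤ) ∣ cc * U₁ := ⟨(U t:ℤ) - U t₀, by linear_combination hca⟩
        have hone : (1:ℤ) = (U₁:ℤ) * Nat.gcdA U₁ g + (g:ℤ) * Nat.gcdB U₁ g := by
          rw [← hb2, hg1]; norm_num
        have hrw : cc = Nat.gcdA U₁ g * (cc * U₁) + Nat.gcdB U₁ g * (cc * g) := by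
          linear_combination cc * hone
        rw [hrw]
        exact dvd_add (Dvd.dvd.mul_left hcu _) (Dvd.dvd.mul_left hcg _)
      have hclt : |cc| < (W₁:ℤ) := by
        have hWt : Cq ≤ W t := (hWrange t htF).1
        have hWt0 : Cq ≤ W t₀ := (hWrange t₀ ht₀F).1
        have d1 : (W t - Cq) < (W t₀ - Cq) + W₁ := div_eq_dist hW₁pos hj
        have d2 : (W t₀ - Cq) < (W t - Cq) + W₁ := div_eq_dist hW₁pos hj.symm
        rw [abs_lt]
        constructor <;> [skip; skip] <;> push_cast <;> omega
      have hcc0 : cc = 0 := Int.eq_zero_of_abs_lt_dvd hdvd hclt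
      have hW₁nz : (W₁:ℤ) ≠ 0 := by exact_mod_cast hW₁pos.ne'
      have ha0 : (U t:ℤ) - U t₀ = 0 := by
        have : (W₁:ℤ) * ((U t:ℤ) - U t₀) = 0 := by rw [← hca, hcc0]; ring
        exact (mul_eq_zero.1 this).resolve_left hW₁nz
      have hb0 : (V t:ℤ) - V t₀ = 0 := by
        have : (W₁:ℤ) * ((V t:ℤ) - V t₀) = 0 := by rw [← hcb, hcc0]; ring
        exact (mul_eq_zero.1 this).resolve_left hW₁nz
      refine ⟨by exact_mod_cast sub_eq_zero.1 ha0, by exact_mod_cast sub_eq_zero.1 hb0,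
        by exact_mod_cast sub_eq_zero.1 hcc0⟩
    have hUne : U t₀ ≠ 0 := by have := (hUrange t₀ ht₀F).1; omega
    have hVne : V t₀ ≠ 0 := by have := (hVrange t₀ ht₀F).1; omega
    have hWne : W t₀ ≠ 0 := by have := (hWrange t₀ ht₀F).1; omega
    have hcard : (F.filter (fun t => key t = k)).card
        ≤ ((U t₀).divisors ×ˢ ((V t₀).divisors ×ˢ (W t₀).divisors)).card := by
      apply Finset.card_le_card_of_injOn (fun t => (x3 t, y3 t, z3 t))
      · intro t ht
        have htF := (Finset.mem_filter.1 ht).1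
        obtain ⟨hu, hv, hw⟩ := hsame t ht
        show (x3 t, y3 t, z3 t) ∈ ((U t₀).divisors ×ˢ ((V t₀).divisors ×ˢ (W t₀).divisors))
        rw [Finset.mem_product, Finset.mem_product]
        refine ⟨Nat.mem_divisors.2 ⟨hu ▸ hx3 t htF, hUne⟩,
          Nat.mem_divisors.2 ⟨hv ▸ hy3 t htF, hVne⟩,
          Nat.mem_divisors.2 ⟨hw ▸ hz3 t htF, hWne⟩⟩
      · intro t ht t' ht' htriple
        simp only [Finset.coe_filter, Set.mem_setOf_eq] at ht ht'
        obtain ⟨hu, hv, hw⟩ := hsame t (Finset.mem_filter.2 ht)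
        obtain ⟨hu', hv', hw'⟩ := hsame t' (Finset.mem_filter.2 ht')
        have e1 : x3 t = x3 t' := congrArg Prod.fst htriple
        have e2 : y3 t = y3 t' := congrArg (fun p => p.2.1) htriple
        have e3 : z3 t = z3 t' := congrArg (fun p => p.2.2) htriple
        exact hrec t ht.1 t' ht'.1 (hu.trans hu'.symm) (hv.trans hv'.symm)
          (hw.trans hw'.symm) e1 e2 e3
    obtain ⟨hT1, hT2, hT3⟩ := hTb t₀ ht₀F
    calc (F.filter (fun t => key t = k)).card
        ≤ ((U t₀).divisors ×ˢ ((V t₀).divisors ×ˢ (W t₀).divisors)).card := hcard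
      _ = (U t₀).divisors.card * ((V t₀).divisors.card * (W t₀).divisors.card) := by
          rw [Finset.card_product, Finset.card_product]
      _ ≤ Tb * (Tb * Tb) := by
          exact Nat.mul_le_mul hT1 (Nat.mul_le_mul hT2 hT3)
      _ = Tb ^ 3 := by ring
  calc ∑ k ∈ 𝒦, (F.filter (fun t => key t = k)).card
      ≤ ∑ _k ∈ 𝒦, Tb ^ 3 := Finset.sum_le_sum hfib
    _ = 𝒦.card * Tb ^ 3 := by rw [Finset.sum_const, smul_eq_mul]
    _ ≤ 16 * (2 * (512 * A * Bq / ga) + 2) * Tb ^ 3 := by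
        apply Nat.mul_le_mul_right
        rw [h𝒦def, Finset.card_product, Finset.card_range]
        have hfc : ((Finset.Icc (-(R:ℤ)) (R:ℤ)).filter (fun k => (ga:ℤ) ∣ k)).card
            ≤ 2 * (R / ga) + 2 := by
          have hinj : ((Finset.Icc (-(R:ℤ)) (R:ℤ)).filter (fun k => (ga:ℤ) ∣ k)).card
              ≤ (Finset.Icc (-((R/ga : ℕ):ℤ) - 1) ((R/ga : ℕ):ℤ)).card := by
            apply Finset.card_le_card_of_injOn (fun k => k / (ga:ℤ))
            · intro kk hkk
              obtain ⟨hmem, hdvd⟩ := Finset.mem_filter.1 hkk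
              obtain ⟨hlo, hhi⟩ := Finset.mem_Icc.1 hmem
              show kk / (ga:ℤ) ∈ Finset.Icc (-((R/ga : ℕ):ℤ) - 1) ((R/ga : ℕ):ℤ)
              rw [Finset.mem_Icc]
              have hgapos : (0:ℤ) < (ga:ℤ) := by exact_mod_cast hga
              constructor
              · have h5 : (-(R:ℤ)) / ga ≤ kk / ga := Int.ediv_le_ediv hgapos hlo
                have h6 : -((R/ga : ℕ):ℤ) - 1 ≤ (-(R:ℤ)) / ga := by
                  rw [Int.le_ediv_iff_mul_le hgapos]
                  have hmod : R < ga * (R / ga) + ga := by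
                    have := Nat.div_add_mod R ga
                    have := Nat.mod_lt R hga
                    omega
                  push_cast
                  push_cast at hmod
                  nlinarith
                linarith
              · have h5 : kk / ga ≤ (R:ℤ) / ga := Int.ediv_le_ediv hgapos hhi
                have h6 : (R:ℤ) / ga = ((R/ga : ℕ):ℤ) := by
                  rw [Int.natCast_div]
                linarith [h6 ▸ h5]
            · intro a ha b hb hab
              simp only [Finset.coe_filter, Set.mem_setOf_eq] at ha hb
              have ha' : a / (ga:ℤ) * ga = a := Int.ediv_mul_cancel ha.2
              have hb' : b / (ga:ℤ) * ga = b := Int.ediv_mul_cancel hb.2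
              dsimp only at hab
              rw [← ha', ← hb', hab]
          have hIcc : (Finset.Icc (-((R/ga : ℕ):ℤ) - 1) ((R/ga : ℕ):ℤ)).card
              = 2 * (R / ga) + 2 := by
            rw [Int.card_Icc]
            have : ((R/ga : ℕ):ℤ) + 1 - (-((R/ga : ℕ):ℤ) - 1) = 2 * ((R/ga : ℕ):ℤ) + 2 := by
              ring
            rw [this]
            omega
          omega
        calc ((Finset.Icc (-(R:ℤ)) (R:ℤ)).filter (fun k => (ga:ℤ) ∣ k)).card * 16
            ≤ (2 * (R / ga) + 2) * 16 := Nat.mul_le_mul_right 16 hfc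
          _ = 16 * (2 * (512 * A * Bq / ga) + 2) := by rw [hRdef]; ring



/-- `dyadic x X` means `x ∈ [X, 2X)`. -/
def dyadic (x X : ℕ) : Prop := X ≤ x ∧ x < 2 * X

/-- `B d c₁ c₂ c₃ Xs Ys Zs` counts tuples `(x, y, z) ∈ ℕ^{3d}` with `x i ∼ Xs i`,
`y i ∼ Ys i`, `z i ∼ Zs i`, satisfying `c₁ ∏ xᵢ^i + c₂ ∏ yᵢ^i = c₃ ∏ zᵢ^i` and
`gcd(c₁ ∏ xᵢ, c₂ ∏ yᵢ, c₃ ∏ zᵢ) = 1` (indices run through `1, …, d`). -/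
noncomputable def B (d : ℕ) (c₁ c₂ c₃ : ℕ) (Xs Ys Zs : Fin d → ℕ) : ℕ :=
  Nat.card {t : (Fin d → ℕ) × (Fin d → ℕ) × (Fin d → ℕ) //
    (∀ i, dyadic (t.1 i) (Xs i)) ∧ (∀ i, dyadic (t.2.1 i) (Ys i)) ∧
    (∀ i, dyadic (t.2.2 i) (Zs i)) ∧
    c₁ * ∏ i, t.1 i ^ (i.val + 1) + c₂ * ∏ i, t.2.1 i ^ (i.val + 1)
      = c₃ * ∏ i, t.2.2 i ^ (i.val + 1) ∧
    Nat.gcd (c₁ * ∏ i, t.1 i) (Nat.gcd (c₂ * ∏ i, t.2.1 i) (c₃ * ∏ i, t.2.2 i)) = 1}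

/-- The parameters are admissible for `(lam, X)`: all are positive,
`∏ᵢ XᵢYᵢZᵢ ∈ [X^lam, 2X^lam)` and `max(∏ Xᵢ^i, ∏ Yᵢ^i, ∏ Zᵢ^i) ∈ [X, 2X)`. -/
def Admissible (d : ℕ) (lam X : ℝ) (c₁ c₂ c₃ : ℕ) (Xs Ys Zs : Fin d → ℕ) : Prop :=
  0 < c₁ ∧ 0 < c₂ ∧ 0 < c₃ ∧
  (∀ i, 0 < Xs i) ∧ (∀ i, 0 < Ys i) ∧ (∀ i, 0 < Zs i) ∧
  X ^ lam ≤ ((∏ i, Xs i * Ys i * Zs i : ℕ) : ℝ) ∧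
  ((∏ i, Xs i * Ys i * Zs i : ℕ) : ℝ) < 2 * X ^ lam ∧
  X ≤ ((max (∏ i, Xs i ^ (i.val + 1))
        (max (∏ i, Ys i ^ (i.val + 1)) (∏ i, Zs i ^ (i.val + 1))) : ℕ) : ℝ) ∧
  ((max (∏ i, Xs i ^ (i.val + 1))
        (max (∏ i, Ys i ^ (i.val + 1)) (∏ i, Zs i ^ (i.val + 1))) : ℕ) : ℝ) < 2 * X

set_option maxHeartbeats 3200000 in
theorem improved_geometry_bound_cubic (d : ℕ) (hd : 3 ≤ d) (ε : ℝ) (hε : 0 < ε) :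
    ∃ C : ℝ, ∀ (lam X : ℝ) (c₁ c₂ c₃ : ℕ) (Xs Ys Zs : Fin d → ℕ),
      0 < lam → 1 ≤ X → Admissible d lam X c₁ c₂ c₃ Xs Ys Zs →
      (B d c₁ c₂ c₃ Xs Ys Zs : ℝ) ≤
        C * (X ^ (lam + ε) /
            (((Xs ⟨0, by omega⟩ * Ys ⟨0, by omega⟩ * Zs ⟨0, by omega⟩) *
              (Xs ⟨2, by omega⟩ * Ys ⟨2, by omega⟩ * Zs ⟨2, by omega⟩) : ℕ) : ℝ)
          + X ^ (lam - 1 + ε) *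
            ((Xs ⟨2, by omega⟩ * Ys ⟨2, by omega⟩ * Zs ⟨2, by omega⟩ : ℕ) : ℝ) ^ 2) := by
  classical
  set δ : ℝ := min (ε / 3) 1 with hδdef
  have hδpos : 0 < δ := lt_min (by linarith) one_pos
  have hδle1 : δ ≤ 1 := min_le_right _ _
  have h3δ : 3 * δ ≤ ε := by
    have : δ ≤ ε / 3 := min_le_left _ _
    linarith
  obtain ⟨K, hK1, hK⟩ := tau_bound δ hδpos
  set σ : ℕ := ∑ i : Fin d, (i.1 + 1) with hσdef
  set K₁ : ℝ := K * 2 ^ (σ + 1) with hK₁def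
  have hK₁pos : 0 < K₁ := by positivity
  refine ⟨524288 * K₁ ^ 3, ?_⟩
  intro lam X c₁ c₂ c₃ Xs Ys Zs hlam hX hadm
  obtain ⟨hc₁, hc₂, hc₃, hXs, hYs, hZs, hN1, hN2, hM1, hM2⟩ := hadm
  have hX0 : (0:ℝ) < X := lt_of_lt_of_le one_pos hX
  set i0 : Fin d := ⟨0, by omega⟩ with hi0def
  set i2 : Fin d := ⟨2, by omega⟩ with hi2def
  have hi20 : i2 ≠ i0 := by
    rw [hi0def, hi2def]
    intro h
    exact absurd (congrArg Fin.val h) (by norm_num)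
  set E : Finset (Fin d) := (Finset.univ.erase i0).erase i2 with hEdef
  have hi2mem : i2 ∈ Finset.univ.erase i0 := Finset.mem_erase.2 ⟨hi20, Finset.mem_univ _⟩
  have hEmem : ∀ i : Fin d, i ≠ i0 → i ≠ i2 → i ∈ E := by
    intro i h1 h2
    exact Finset.mem_erase.2 ⟨h2, Finset.mem_erase.2 ⟨h1, Finset.mem_univ _⟩⟩
  have hEne : ∀ i ∈ E, i ≠ i0 ∧ i ≠ i2 := by
    intro i hi
    obtain ⟨h2, h1⟩ := Finset.mem_erase.1 hi
    exact ⟨(Finset.mem_erase.1 h1).1, h2⟩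
  -- splitting of weighted products
  have hsplit : ∀ f : Fin d → ℕ,
      ∏ i, f i ^ (i.1 + 1) = (f i0 * f i2 ^ 3) * ∏ i ∈ E, f i ^ (i.1 + 1) := by
    intro f
    rw [← Finset.mul_prod_erase Finset.univ (fun i => f i ^ (i.1 + 1)) (Finset.mem_univ i0),
        ← Finset.mul_prod_erase _ (fun i => f i ^ (i.1 + 1)) hi2mem]
    have h0 : f i0 ^ (i0.1 + 1) = f i0 := by
      rw [hi0def]
      exact pow_one _
    have h2 : f i2 ^ (i2.1 + 1) = f i2 ^ 3 := by rw [hi2def]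
    rw [h0, h2, hEdef, mul_assoc]
  -- product positivity and weighted bounds
  have hdyadpos : ∀ (Rs f : Fin d → ℕ), (∀ i, 0 < Rs i) → (∀ i, dyadic (f i) (Rs i)) →
      ∀ i, 0 < f i := by
    intro Rs f hR hf i
    exact lt_of_lt_of_le (hR i) (hf i).1
  have hweight : ∀ (Rs f : Fin d → ℕ), (∀ i, dyadic (f i) (Rs i)) →
      (∏ i, f i ^ (i.1 + 1)) ≤ 2 ^ σ * ∏ i, Rs i ^ (i.1 + 1) := by
    intro Rs f hf
    calc ∏ i, f i ^ (i.1 + 1) ≤ ∏ i, (2 * Rs i) ^ (i.1 + 1) := by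
          apply Finset.prod_le_prod'
          intro i _
          exact Nat.pow_le_pow_left (le_of_lt (hf i).2) _
      _ = ∏ i, (2 ^ (i.1 + 1) * Rs i ^ (i.1 + 1)) := by
          apply Finset.prod_congr rfl
          intro i _
          rw [mul_pow]
      _ = (∏ i : Fin d, 2 ^ (i.1 + 1)) * ∏ i, Rs i ^ (i.1 + 1) := Finset.prod_mul_distrib
      _ = 2 ^ σ * ∏ i, Rs i ^ (i.1 + 1) := by
          rw [hσdef, Finset.prod_pow_eq_pow_sum]
  set maxN : ℕ := max (∏ i, Xs i ^ (i.val + 1))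
      (max (∏ i, Ys i ^ (i.val + 1)) (∏ i, Zs i ^ (i.val + 1))) with hmaxNdef
  have hweightR : ∀ (Rs f : Fin d → ℕ), (∀ i, dyadic (f i) (Rs i)) →
      (∏ i, Rs i ^ (i.1 + 1)) ≤ maxN →
      ((∏ i, f i ^ (i.1 + 1) : ℕ) : ℝ) ≤ 2 ^ (σ + 1) * X := by
    intro Rs f hf hRmax
    have h1 : (∏ i, f i ^ (i.1 + 1)) ≤ 2 ^ σ * maxN :=
      le_trans (hweight Rs f hf) (Nat.mul_le_mul_left _ hRmax)
    calc ((∏ i, f i ^ (i.1 + 1) : ℕ) : ℝ) ≤ ((2 ^ σ * maxN : ℕ) : ℝ) := by exact_mod_cast h1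
      _ = 2 ^ σ * (maxN : ℝ) := by push_cast; ring
      _ ≤ 2 ^ σ * (2 * X) := by
          apply mul_le_mul_of_nonneg_left (le_of_lt hM2) (by positivity)
      _ = 2 ^ (σ + 1) * X := by ring
  -- the big finset
  set 𝒟 : Finset ((Fin d → ℕ) × (Fin d → ℕ) × (Fin d → ℕ)) :=
    (Fintype.piFinset fun i => Finset.Ico (Xs i) (2 * Xs i)) ×ˢ
    ((Fintype.piFinset fun i => Finset.Ico (Ys i) (2 * Ys i)) ×ˢ
     (Fintype.piFinset fun i => Finset.Ico (Zs i) (2 * Zs i))) with h𝒟def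
  set 𝒯 := 𝒟.filter (fun t =>
    (∀ i, dyadic (t.1 i) (Xs i)) ∧ (∀ i, dyadic (t.2.1 i) (Ys i)) ∧
    (∀ i, dyadic (t.2.2 i) (Zs i)) ∧
    c₁ * ∏ i, t.1 i ^ (i.val + 1) + c₂ * ∏ i, t.2.1 i ^ (i.val + 1)
      = c₃ * ∏ i, t.2.2 i ^ (i.val + 1) ∧
    Nat.gcd (c₁ * ∏ i, t.1 i) (Nat.gcd (c₂ * ∏ i, t.2.1 i) (c₃ * ∏ i, t.2.2 i)) = 1) with h𝒯def
  have hB𝒯 : B d c₁ c₂ c₃ Xs Ys Zs ≤ 𝒯.card := by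
    rw [B, ← Nat.card_eq_finsetCard 𝒯]
    have hmem : ∀ t : ((Fin d → ℕ) × (Fin d → ℕ) × (Fin d → ℕ)),
        ((∀ i, dyadic (t.1 i) (Xs i)) ∧ (∀ i, dyadic (t.2.1 i) (Ys i)) ∧
        (∀ i, dyadic (t.2.2 i) (Zs i)) ∧
        c₁ * ∏ i, t.1 i ^ (i.val + 1) + c₂ * ∏ i, t.2.1 i ^ (i.val + 1)
          = c₃ * ∏ i, t.2.2 i ^ (i.val + 1) ∧
        Nat.gcd (c₁ * ∏ i, t.1 i) (Nat.gcd (c₂ * ∏ i, t.2.1 i) (c₃ * ∏ i, t.2.2 i)) = 1) →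
        t ∈ 𝒯 := by
      intro t ht
      rw [h𝒯def, Finset.mem_filter]
      refine ⟨?_, ht⟩
      obtain ⟨h1, h2, h3, _, _⟩ := ht
      rw [h𝒟def, Finset.mem_product, Finset.mem_product]
      refine ⟨?_, ?_, ?_⟩
      · rw [Fintype.mem_piFinset]; intro i; rw [Finset.mem_Ico]; exact h1 i
      · rw [Fintype.mem_piFinset]; intro i; rw [Finset.mem_Ico]; exact h2 i
      · rw [Fintype.mem_piFinset]; intro i; rw [Finset.mem_Ico]; exact h3 i
    apply Nat.card_le_card_of_injective (fun s => (⟨s.1, hmem s.1 s.2⟩ : {x // x ∈ 𝒯}))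
    intro s s' h
    simp only [Subtype.mk.injEq] at h
    exact Subtype.ext h
  -- fibering over the rest variables
  set mask : (Fin d → ℕ) → (Fin d → ℕ) :=
    fun f i => if i = i0 ∨ i = i2 then 0 else f i with hmaskdef
  set rmk : ((Fin d → ℕ) × (Fin d → ℕ) × (Fin d → ℕ)) →
      ((Fin d → ℕ) × (Fin d → ℕ) × (Fin d → ℕ)) :=
    fun t => (mask t.1, mask t.2.1, mask t.2.2) with hrmkdef
  set Pfs : Finset ((Fin d → ℕ) × (Fin d → ℕ) × (Fin d → ℕ)) :=
    (Fintype.piFinset fun i => if i = i0 ∨ i = i2 then {0} else Finset.Ico (Xs i) (2 * Xs i)) ×ˢ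
    ((Fintype.piFinset fun i => if i = i0 ∨ i = i2 then {0} else Finset.Ico (Ys i) (2 * Ys i)) ×ˢ
     (Fintype.piFinset fun i => if i = i0 ∨ i = i2 then {0} else Finset.Ico (Zs i) (2 * Zs i))) with hPfsdef
  have hmapsPfs : ∀ t ∈ 𝒯, rmk t ∈ Pfs := by
    intro t ht
    rw [h𝒯def, Finset.mem_filter] at ht
    obtain ⟨ht𝒟, hP⟩ := ht
    rw [h𝒟def, Finset.mem_product, Finset.mem_product] at ht𝒟
    obtain ⟨hd1, hd2, hd3⟩ := ht𝒟
    rw [Fintype.mem_piFinset] at hd1 hd2 hd3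
    rw [hPfsdef, Finset.mem_product, Finset.mem_product]
    have hcomp : ∀ (g Rs : Fin d → ℕ), (∀ i, g i ∈ Finset.Ico (Rs i) (2 * Rs i)) →
        mask g ∈ Fintype.piFinset
          (fun i => if i = i0 ∨ i = i2 then ({0} : Finset ℕ) else Finset.Ico (Rs i) (2 * Rs i)) := by
      intro g Rs hg
      rw [Fintype.mem_piFinset]
      intro i
      rw [hmaskdef]
      dsimp only
      split_ifs with hcase
      · exact Finset.mem_singleton_self 0
      · exact hg i
    exact ⟨hcomp _ _ hd1, hcomp _ _ hd2, hcomp _ _ hd3⟩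
  have hsum := Finset.card_eq_sum_card_fiberwise hmapsPfs
  -- parameters for the core count
  set A : ℕ := Xs i0 * Xs i2 ^ 3 with hAdef
  set Bq : ℕ := Ys i0 * Ys i2 ^ 3 with hBqdef
  set Cq : ℕ := Zs i0 * Zs i2 ^ 3 with hCqdef
  have hApos : 0 < A := Nat.mul_pos (hXs i0) (Nat.pow_pos (hXs i2))
  have hBqpos : 0 < Bq := Nat.mul_pos (hYs i0) (Nat.pow_pos (hYs i2))
  have hCqpos : 0 < Cq := Nat.mul_pos (hZs i0) (Nat.pow_pos (hZs i2))
  set Tb : ℕ := ⌊K * ((2:ℝ) ^ (σ + 1) * X) ^ δ⌋₊ with hTbdef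
  have htauTb : ∀ n : ℕ, n ≠ 0 → ((n:ℝ) ≤ 2 ^ (σ + 1) * X) → n.divisors.card ≤ Tb := by
    intro n h0 hle
    rw [hTbdef]
    apply Nat.le_floor
    calc ((n.divisors.card : ℕ) : ℝ) ≤ K * (n:ℝ) ^ δ := hK n h0
      _ ≤ K * ((2:ℝ) ^ (σ + 1) * X) ^ δ := by
          apply mul_le_mul_of_nonneg_left _ (by linarith)
          apply Real.rpow_le_rpow (by positivity) hle (le_of_lt hδpos)
  set Ufun : ((Fin d → ℕ) × (Fin d → ℕ) × (Fin d → ℕ)) → ℕ :=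
    fun t => t.1 i0 * t.1 i2 ^ 3 with hUfundef
  set Vfun : ((Fin d → ℕ) × (Fin d → ℕ) × (Fin d → ℕ)) → ℕ :=
    fun t => t.2.1 i0 * t.2.1 i2 ^ 3 with hVfundef
  set Wfun : ((Fin d → ℕ) × (Fin d → ℕ) × (Fin d → ℕ)) → ℕ :=
    fun t => t.2.2 i0 * t.2.2 i2 ^ 3 with hWfundef
  -- decoding membership in 𝒯
  have hdec : ∀ t ∈ 𝒯,
      (∀ i, dyadic (t.1 i) (Xs i)) ∧ (∀ i, dyadic (t.2.1 i) (Ys i)) ∧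
      (∀ i, dyadic (t.2.2 i) (Zs i)) ∧
      c₁ * ∏ i, t.1 i ^ (i.val + 1) + c₂ * ∏ i, t.2.1 i ^ (i.val + 1)
        = c₃ * ∏ i, t.2.2 i ^ (i.val + 1) ∧
      Nat.gcd (c₁ * ∏ i, t.1 i) (Nat.gcd (c₂ * ∏ i, t.2.1 i) (c₃ * ∏ i, t.2.2 i)) = 1 := by
    intro t ht
    rw [h𝒯def, Finset.mem_filter] at ht
    exact ht.2
  -- no prime can divide both weighted full products (x side and z side)
  have hnoprime : ∀ t ∈ 𝒯, ∀ p : ℕ, p.Prime →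
      p ∣ c₁ * ∏ i, t.1 i ^ (i.val + 1) → p ∣ c₃ * ∏ i, t.2.2 i ^ (i.val + 1) → False := by
    intro t ht p hp h1 h3
    obtain ⟨_, _, _, heqn, hgcdn⟩ := hdec t ht
    have h2 : p ∣ c₂ * ∏ i, t.2.1 i ^ (i.val + 1) := by
      have hsub : c₃ * ∏ i, t.2.2 i ^ (i.val + 1) - c₁ * ∏ i, t.1 i ^ (i.val + 1)
          = c₂ * ∏ i, t.2.1 i ^ (i.val + 1) := by omega
      rw [← hsub]
      exact Nat.dvd_sub h3 h1
    have transfer : ∀ (c : ℕ) (f : Fin d → ℕ),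
        p ∣ c * ∏ i, f i ^ (i.val + 1) → p ∣ c * ∏ i, f i := by
      intro c f h
      rcases (Nat.Prime.dvd_mul hp).1 h with hc | hprod
      · exact Dvd.dvd.mul_right hc _
      · obtain ⟨i, _, hdvd⟩ := ((Nat.Prime.prime hp).dvd_finset_prod_iff _).1 hprod
        exact Dvd.dvd.mul_left
          ((hp.dvd_of_dvd_pow hdvd).trans (Finset.dvd_prod_of_mem f (Finset.mem_univ i))) c
    have hdvd1 : p ∣ Nat.gcd (c₁ * ∏ i, t.1 i)
        (Nat.gcd (c₂ * ∏ i, t.2.1 i) (c₃ * ∏ i, t.2.2 i)) :=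
      Nat.dvd_gcd (transfer c₁ t.1 h1)
        (Nat.dvd_gcd (transfer c₂ t.2.1 h2) (transfer c₃ t.2.2 h3))
    rw [hgcdn] at hdvd1
    exact Nat.Prime.one_lt hp |>.ne' (Nat.dvd_one.1 hdvd1)
  -- per fiber bound
  have hfibbound : ∀ r ∈ Pfs, ((𝒯.filter (fun t => rmk t = r)).card : ℝ) ≤
      (262144 * ((A:ℝ) * Bq * Cq) / X + 32) * (Tb:ℝ) ^ 3 := by
    intro r _
    rcases Finset.eq_empty_or_nonempty (𝒯.filter (fun t => rmk t = r)) with hemp | ⟨t₀, ht₀⟩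
    · rw [hemp]
      simp only [Finset.card_empty, Nat.cast_zero]
      positivity
    have hFsub : ∀ t ∈ 𝒯.filter (fun t => rmk t = r), t ∈ 𝒯 :=
      fun t ht => (Finset.mem_filter.1 ht).1
    have hFr : ∀ t ∈ 𝒯.filter (fun t => rmk t = r), rmk t = r :=
      fun t ht => (Finset.mem_filter.1 ht).2
    have ht₀T : t₀ ∈ 𝒯 := hFsub t₀ ht₀
    -- agreement with r on E
    have hagree1 : ∀ t ∈ 𝒯.filter (fun t => rmk t = r), ∀ i ∈ E, t.1 i = r.1 i := by
      intro t ht i hi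
      obtain ⟨hne0, hne2⟩ := hEne i hi
      have h := congrFun (congrArg (fun p => p.1) (hFr t ht)) i
      rw [hrmkdef] at h
      dsimp only at h
      rw [hmaskdef] at h
      dsimp only at h
      rwa [if_neg (by tauto)] at h
    have hagree2 : ∀ t ∈ 𝒯.filter (fun t => rmk t = r), ∀ i ∈ E, t.2.1 i = r.2.1 i := by
      intro t ht i hi
      obtain ⟨hne0, hne2⟩ := hEne i hi
      have h := congrFun (congrArg (fun p => p.2.1) (hFr t ht)) i
      rw [hrmkdef] at h
      dsimp only at h
      rw [hmaskdef] at h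
      dsimp only at h
      rwa [if_neg (by tauto)] at h
    have hagree3 : ∀ t ∈ 𝒯.filter (fun t => rmk t = r), ∀ i ∈ E, t.2.2 i = r.2.2 i := by
      intro t ht i hi
      obtain ⟨hne0, hne2⟩ := hEne i hi
      have h := congrFun (congrArg (fun p => p.2.2) (hFr t ht)) i
      rw [hrmkdef] at h
      dsimp only at h
      rw [hmaskdef] at h
      dsimp only at h
      rwa [if_neg (by tauto)] at h
    -- the coefficients
    set al : ℕ := c₁ * ∏ i ∈ E, r.1 i ^ (i.1 + 1) with haldef
    set be : ℕ := c₂ * ∏ i ∈ E, r.2.1 i ^ (i.1 + 1) with hbedef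
    set ga : ℕ := c₃ * ∏ i ∈ E, r.2.2 i ^ (i.1 + 1) with hgadef
    have hgroup1 : ∀ t ∈ 𝒯.filter (fun t => rmk t = r),
        al * Ufun t = c₁ * ∏ i, t.1 i ^ (i.val + 1) := by
      intro t ht
      rw [hsplit t.1]
      have he : ∏ i ∈ E, t.1 i ^ (i.1 + 1) = ∏ i ∈ E, r.1 i ^ (i.1 + 1) :=
        Finset.prod_congr rfl (fun i hi => by rw [hagree1 t ht i hi])
      rw [he, haldef, hUfundef]
      ring
    have hgroup2 : ∀ t ∈ 𝒯.filter (fun t => rmk t = r),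
        be * Vfun t = c₂ * ∏ i, t.2.1 i ^ (i.val + 1) := by
      intro t ht
      rw [hsplit t.2.1]
      have he : ∏ i ∈ E, t.2.1 i ^ (i.1 + 1) = ∏ i ∈ E, r.2.1 i ^ (i.1 + 1) :=
        Finset.prod_congr rfl (fun i hi => by rw [hagree2 t ht i hi])
      rw [he, hbedef, hVfundef]
      ring
    have hgroup3 : ∀ t ∈ 𝒯.filter (fun t => rmk t = r),
        ga * Wfun t = c₃ * ∏ i, t.2.2 i ^ (i.val + 1) := by
      intro t ht
      rw [hsplit t.2.2]
      have he : ∏ i ∈ E, t.2.2 i ^ (i.1 + 1) = ∏ i ∈ E, r.2.2 i ^ (i.1 + 1) :=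
        Finset.prod_congr rfl (fun i hi => by rw [hagree3 t ht i hi])
      rw [he, hgadef, hWfundef]
      ring
    have hgapos : 0 < ga := by
      rw [hgadef]
      apply Nat.mul_pos hc₃
      apply Finset.prod_pos
      intro i hi
      rw [← hagree3 t₀ ht₀ i hi]
      exact Nat.pow_pos (hdyadpos Zs t₀.2.2 hZs (hdec t₀ ht₀T).2.2.1 i)
    have heqF : ∀ t ∈ 𝒯.filter (fun t => rmk t = r),
        al * Ufun t + be * Vfun t = ga * Wfun t := by
      intro t ht
      rw [hgroup1 t ht, hgroup2 t ht, hgroup3 t ht]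
      exact (hdec t (hFsub t ht)).2.2.2.1
    have hcop : Nat.Coprime al ga := by
      rw [Nat.Coprime]
      by_contra hne
      set p := (Nat.gcd al ga).minFac with hpdef
      have hp : p.Prime := Nat.minFac_prime hne
      have hpal : p ∣ al := (Nat.minFac_dvd _).trans (Nat.gcd_dvd_left _ _)
      have hpga : p ∣ ga := (Nat.minFac_dvd _).trans (Nat.gcd_dvd_right _ _)
      apply hnoprime t₀ ht₀T p hp
      · exact hpal.trans ⟨Ufun t₀, (hgroup1 t₀ ht₀).symm⟩
      · exact hpga.trans ⟨Wfun t₀, (hgroup3 t₀ ht₀).symm⟩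
    have hUr : ∀ t ∈ 𝒯.filter (fun t => rmk t = r), A ≤ Ufun t ∧ Ufun t < 16 * A := by
      intro t ht
      have hdy := (hdec t (hFsub t ht)).1
      have h0 := hdy i0
      have h2 := hdy i2
      constructor
      · rw [hAdef, hUfundef]
        exact Nat.mul_le_mul h0.1 (Nat.pow_le_pow_left h2.1 3)
      · rw [hAdef, hUfundef]
        calc t.1 i0 * t.1 i2 ^ 3 < (2 * Xs i0) * (2 * Xs i2) ^ 3 := by
              apply mul_lt_mul'' h0.2 (Nat.pow_lt_pow_left h2.2 (by norm_num)) (Nat.zero_le _) (Nat.zero_le _)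
          _ = 16 * (Xs i0 * Xs i2 ^ 3) := by ring
    have hVr : ∀ t ∈ 𝒯.filter (fun t => rmk t = r), Bq ≤ Vfun t ∧ Vfun t < 16 * Bq := by
      intro t ht
      have hdy := (hdec t (hFsub t ht)).2.1
      have h0 := hdy i0
      have h2 := hdy i2
      constructor
      · rw [hBqdef, hVfundef]
        exact Nat.mul_le_mul h0.1 (Nat.pow_le_pow_left h2.1 3)
      · rw [hBqdef, hVfundef]
        calc t.2.1 i0 * t.2.1 i2 ^ 3 < (2 * Ys i0) * (2 * Ys i2) ^ 3 := by
              apply mul_lt_mul'' h0.2 (Nat.pow_lt_pow_left h2.2 (by norm_num)) (Nat.zero_le _) (Nat.zero_le _)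
          _ = 16 * (Ys i0 * Ys i2 ^ 3) := by ring
    have hWr : ∀ t ∈ 𝒯.filter (fun t => rmk t = r), Cq ≤ Wfun t ∧ Wfun t < 16 * Cq := by
      intro t ht
      have hdy := (hdec t (hFsub t ht)).2.2.1
      have h0 := hdy i0
      have h2 := hdy i2
      constructor
      · rw [hCqdef, hWfundef]
        exact Nat.mul_le_mul h0.1 (Nat.pow_le_pow_left h2.1 3)
      · rw [hCqdef, hWfundef]
        calc t.2.2 i0 * t.2.2 i2 ^ 3 < (2 * Zs i0) * (2 * Zs i2) ^ 3 := by
              apply mul_lt_mul'' h0.2 (Nat.pow_lt_pow_left h2.2 (by norm_num)) (Nat.zero_le _) (Nat.zero_le _)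
          _ = 16 * (Zs i0 * Zs i2 ^ 3) := by ring
    have hg3 : ∀ t ∈ 𝒯.filter (fun t => rmk t = r),
        Nat.gcd (Ufun t) (Nat.gcd (Vfun t) (Wfun t)) = 1 := by
      intro t ht
      by_contra hne
      set p := (Nat.gcd (Ufun t) (Nat.gcd (Vfun t) (Wfun t))).minFac with hpdef
      have hp : p.Prime := Nat.minFac_prime hne
      have hpu : p ∣ Ufun t := (Nat.minFac_dvd _).trans (Nat.gcd_dvd_left _ _)
      have hpw : p ∣ Wfun t :=
        (Nat.minFac_dvd _).trans ((Nat.gcd_dvd_right _ _).trans (Nat.gcd_dvd_right _ _))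
      apply hnoprime t (hFsub t ht) p hp
      · exact (hpu.trans ⟨∏ i ∈ E, t.1 i ^ (i.1 + 1), by rw [hsplit t.1]⟩).mul_left c₁
      · exact (hpw.trans ⟨∏ i ∈ E, t.2.2 i ^ (i.1 + 1), by rw [hsplit t.2.2]⟩).mul_left c₃
    have hx3d : ∀ t ∈ 𝒯.filter (fun t => rmk t = r), t.1 i2 ∣ Ufun t := by
      intro t _
      exact ⟨t.1 i0 * t.1 i2 ^ 2, by rw [hUfundef]; ring⟩
    have hy3d : ∀ t ∈ 𝒯.filter (fun t => rmk t = r), t.2.1 i2 ∣ Vfun t := by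
      intro t _
      exact ⟨t.2.1 i0 * t.2.1 i2 ^ 2, by rw [hVfundef]; ring⟩
    have hz3d : ∀ t ∈ 𝒯.filter (fun t => rmk t = r), t.2.2 i2 ∣ Wfun t := by
      intro t _
      exact ⟨t.2.2 i0 * t.2.2 i2 ^ 2, by rw [hWfundef]; ring⟩
    have hrecon : ∀ t ∈ 𝒯.filter (fun t => rmk t = r), ∀ t' ∈ 𝒯.filter (fun t => rmk t = r),
        Ufun t = Ufun t' → Vfun t = Vfun t' → Wfun t = Wfun t' →
        t.1 i2 = t'.1 i2 → t.2.1 i2 = t'.2.1 i2 → t.2.2 i2 = t'.2.2 i2 → t = t' := by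
      intro t ht t' ht' hU hV hW h1 h2 h3
      have hfirst : ∀ (f f' : Fin d → ℕ), (∀ i ∈ E, f i = f' i) → f i2 = f' i2 →
          f i0 * f i2 ^ 3 = f' i0 * f' i2 ^ 3 → 0 < f i2 → f = f' := by
        intro f f' hE' h2' hU' hpos
        funext i
        by_cases hc0 : i = i0
        · subst hc0
          rw [h2'] at hU'
          have hp3 : 0 < f' i2 ^ 3 := by
            rw [← h2']
            exact Nat.pow_pos hpos
          exact Nat.eq_of_mul_eq_mul_right hp3 hU'
        · by_cases hc2 : i = i2
          · subst hc2; exact h2'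
          · exact hE' i (hEmem i hc0 hc2)
      have hxpos : 0 < t.1 i2 := hdyadpos Xs t.1 hXs (hdec t (hFsub t ht)).1 i2
      have hypos : 0 < t.2.1 i2 := hdyadpos Ys t.2.1 hYs (hdec t (hFsub t ht)).2.1 i2
      have hzpos : 0 < t.2.2 i2 := hdyadpos Zs t.2.2 hZs (hdec t (hFsub t ht)).2.2.1 i2
      have e1 : t.1 = t'.1 := by
        apply hfirst _ _ (fun i hi => (hagree1 t ht i hi).trans (hagree1 t' ht' i hi).symm) h1 _ hxpos
        rw [hUfundef] at hU
        exact hU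
      have e2 : t.2.1 = t'.2.1 := by
        apply hfirst _ _ (fun i hi => (hagree2 t ht i hi).trans (hagree2 t' ht' i hi).symm) h2 _ hypos
        rw [hVfundef] at hV
        exact hV
      have e3 : t.2.2 = t'.2.2 := by
        apply hfirst _ _ (fun i hi => (hagree3 t ht i hi).trans (hagree3 t' ht' i hi).symm) h3 _ hzpos
        rw [hWfundef] at hW
        exact hW
      exact Prod.ext e1 (Prod.ext e2 e3)
    have hTball : ∀ t ∈ 𝒯.filter (fun t => rmk t = r),
        (Ufun t).divisors.card ≤ Tb ∧ (Vfun t).divisors.card ≤ Tb ∧ (Wfun t).divisors.card ≤ Tb := by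
      intro t ht
      have hdyx := (hdec t (hFsub t ht)).1
      have hdyy := (hdec t (hFsub t ht)).2.1
      have hdyz := (hdec t (hFsub t ht)).2.2.1
      have hgen : ∀ (Rs f : Fin d → ℕ), (∀ i, 0 < Rs i) → (∀ i, dyadic (f i) (Rs i)) →
          (∏ i, Rs i ^ (i.1 + 1)) ≤ maxN →
          (f i0 * f i2 ^ 3).divisors.card ≤ Tb := by
        intro Rs f hRs hf hle
        have hpos : ∀ i, 0 < f i := hdyadpos Rs f hRs hf
        have hne : f i0 * f i2 ^ 3 ≠ 0 :=
          Nat.mul_ne_zero (hpos i0).ne' (pow_ne_zero 3 (hpos i2).ne')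
        apply htauTb _ hne
        have hle1 : f i0 * f i2 ^ 3 ≤ ∏ i, f i ^ (i.1 + 1) := by
          rw [hsplit f]
          apply Nat.le_mul_of_pos_right
          apply Finset.prod_pos
          intro i _
          exact Nat.pow_pos (hpos i)
        calc ((f i0 * f i2 ^ 3 : ℕ) : ℝ) ≤ ((∏ i, f i ^ (i.1 + 1) : ℕ) : ℝ) := by
              exact_mod_cast hle1
          _ ≤ 2 ^ (σ + 1) * X := hweightR Rs f hf hle
      exact ⟨hgen Xs t.1 hXs hdyx (le_max_left _ _),
        hgen Ys t.2.1 hYs hdyy (le_trans (le_max_left _ _) (le_max_right _ _)),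
        hgen Zs t.2.2 hZs hdyz (le_trans (le_max_right _ _) (le_max_right _ _))⟩
    have hcore := core_count (𝒯.filter (fun t => rmk t = r)) Ufun Vfun Wfun
      (fun t => t.1 i2) (fun t => t.2.1 i2) (fun t => t.2.2 i2)
      al be ga A Bq Cq hApos hBqpos hCqpos hgapos hcop heqF hUr hVr hWr hg3
      hx3d hy3d hz3d hrecon Tb hTball
    -- lower bound for ga
    have hgaX : X ≤ (ga:ℝ) * (16 * Cq) := by
      have hWle : maxN ≤ c₃ * ∏ i, t₀.2.2 i ^ (i.val + 1) := by
        obtain ⟨_, _, _, heqn, _⟩ := hdec t₀ ht₀T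
        have h1 : (∏ i, t₀.1 i ^ (i.val + 1)) ≤ c₃ * ∏ i, t₀.2.2 i ^ (i.val + 1) := by
          calc (∏ i, t₀.1 i ^ (i.val + 1)) ≤ c₁ * ∏ i, t₀.1 i ^ (i.val + 1) :=
                Nat.le_mul_of_pos_left _ hc₁
            _ ≤ c₃ * ∏ i, t₀.2.2 i ^ (i.val + 1) := by omega
        have h2 : (∏ i, t₀.2.1 i ^ (i.val + 1)) ≤ c₃ * ∏ i, t₀.2.2 i ^ (i.val + 1) := by
          calc (∏ i, t₀.2.1 i ^ (i.val + 1)) ≤ c₂ * ∏ i, t₀.2.1 i ^ (i.val + 1) :=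
                Nat.le_mul_of_pos_left _ hc₂
            _ ≤ c₃ * ∏ i, t₀.2.2 i ^ (i.val + 1) := by omega
        have h3 : (∏ i, t₀.2.2 i ^ (i.val + 1)) ≤ c₃ * ∏ i, t₀.2.2 i ^ (i.val + 1) :=
          Nat.le_mul_of_pos_left _ hc₃
        have hx1 : (∏ i, Xs i ^ (i.val + 1)) ≤ ∏ i, t₀.1 i ^ (i.val + 1) := by
          apply Finset.prod_le_prod'
          intro i _
          exact Nat.pow_le_pow_left ((hdec t₀ ht₀T).1 i).1 _
        have hy1 : (∏ i, Ys i ^ (i.val + 1)) ≤ ∏ i, t₀.2.1 i ^ (i.val + 1) := by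
          apply Finset.prod_le_prod'
          intro i _
          exact Nat.pow_le_pow_left ((hdec t₀ ht₀T).2.1 i).1 _
        have hz1 : (∏ i, Zs i ^ (i.val + 1)) ≤ ∏ i, t₀.2.2 i ^ (i.val + 1) := by
          apply Finset.prod_le_prod'
          intro i _
          exact Nat.pow_le_pow_left ((hdec t₀ ht₀T).2.2.1 i).1 _
        rw [hmaxNdef]
        apply max_le (le_trans hx1 h1) (max_le (le_trans hy1 h2) (le_trans hz1 h3))
      have hWc : c₃ * ∏ i, t₀.2.2 i ^ (i.val + 1) = ga * Wfun t₀ := (hgroup3 t₀ ht₀).symm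
      have hWlt : Wfun t₀ < 16 * Cq := (hWr t₀ ht₀).2
      calc X ≤ (maxN : ℝ) := hM1
        _ ≤ ((ga * Wfun t₀ : ℕ) : ℝ) := by
            rw [← hWc]
            exact_mod_cast hWle
        _ ≤ ((ga * (16 * Cq) : ℕ) : ℝ) := by
            apply Nat.cast_le.2
            exact Nat.mul_le_mul_left _ (le_of_lt hWlt)
        _ = (ga:ℝ) * (16 * Cq) := by push_cast; ring
    have hga0 : (0:ℝ) < (ga:ℝ) := by exact_mod_cast hgapos
    -- convert the core bound to ℝ
    have hcoreR : ((𝒯.filter (fun t => rmk t = r)).card : ℝ) ≤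
        16 * (2 * ((512 * A * Bq / ga : ℕ) : ℝ) + 2) * (Tb:ℝ) ^ 3 := by
      have := hcore
      exact_mod_cast this
    have hdivle : ((512 * A * Bq / ga : ℕ) : ℝ) ≤ 512 * (A:ℝ) * Bq * (16 * Cq) / X := by
      calc ((512 * A * Bq / ga : ℕ) : ℝ) ≤ ((512 * A * Bq : ℕ) : ℝ) / (ga : ℝ) :=
            Nat.cast_div_le
        _ ≤ 512 * (A:ℝ) * Bq * (16 * Cq) / X := by
            rw [div_le_div_iff₀ hga0 hX0]
            have hc : (0:ℝ) ≤ ((512 * A * Bq : ℕ) : ℝ) := by positivity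
            have := mul_le_mul_of_nonneg_left hgaX hc
            calc ((512 * A * Bq : ℕ) : ℝ) * X ≤ ((512 * A * Bq : ℕ):ℝ) * ((ga:ℝ) * (16 * Cq)) :=
                  this
              _ = 512 * (A:ℝ) * Bq * (16 * Cq) * ga := by push_cast; ring
    calc ((𝒯.filter (fun t => rmk t = r)).card : ℝ)
        ≤ 16 * (2 * ((512 * A * Bq / ga : ℕ) : ℝ) + 2) * (Tb:ℝ) ^ 3 := hcoreR
      _ ≤ 16 * (2 * (512 * (A:ℝ) * Bq * (16 * Cq) / X) + 2) * (Tb:ℝ) ^ 3 := by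
          apply mul_le_mul_of_nonneg_right _ (by positivity)
          have : 2 * ((512 * A * Bq / ga : ℕ) : ℝ) ≤ 2 * (512 * (A:ℝ) * Bq * (16 * Cq) / X) := by
            linarith
          linarith
      _ = (262144 * ((A:ℝ) * Bq * Cq) / X + 32) * (Tb:ℝ) ^ 3 := by
          ring
  -- cardinality of the rest-finset
  have hPfscardaux : ∀ (Rs : Fin d → ℕ),
      ∏ i, (if i = i0 ∨ i = i2 then ({0}:Finset ℕ) else Finset.Ico (Rs i) (2 * Rs i)).card
        = ∏ i ∈ E, Rs i := by
    intro Rs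
    rw [← Finset.mul_prod_erase Finset.univ
        (fun i => (if i = i0 ∨ i = i2 then ({0}:Finset ℕ) else Finset.Ico (Rs i) (2 * Rs i)).card)
        (Finset.mem_univ i0),
      ← Finset.mul_prod_erase _ _ hi2mem]
    rw [if_pos (Or.inl rfl), if_pos (Or.inr rfl), Finset.card_singleton]
    have hcongr : ∏ i ∈ (Finset.univ.erase i0).erase i2,
        (if i = i0 ∨ i = i2 then ({0}:Finset ℕ) else Finset.Ico (Rs i) (2 * Rs i)).card
        = ∏ i ∈ (Finset.univ.erase i0).erase i2, Rs i := by
      apply Finset.prod_congr rfl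
      intro i hi
      obtain ⟨hne0, hne2⟩ := hEne i (by rw [hEdef]; exact hi)
      rw [if_neg (by tauto), Nat.card_Ico]
      omega
    rw [hcongr, hEdef, one_mul, one_mul]
  have hPfscard : Pfs.card = (∏ i ∈ E, Xs i) * ((∏ i ∈ E, Ys i) * (∏ i ∈ E, Zs i)) := by
    rw [hPfsdef, Finset.card_product, Finset.card_product,
      Fintype.card_piFinset, Fintype.card_piFinset, Fintype.card_piFinset,
      hPfscardaux Xs, hPfscardaux Ys, hPfscardaux Zs]
  have hNsplit : (∏ i, Xs i * Ys i * Zs i)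
      = (Xs i0 * Ys i0 * Zs i0) * ((Xs i2 * Ys i2 * Zs i2) * ∏ i ∈ E, (Xs i * Ys i * Zs i)) := by
    rw [← Finset.mul_prod_erase Finset.univ (fun i => Xs i * Ys i * Zs i) (Finset.mem_univ i0),
        ← Finset.mul_prod_erase _ _ hi2mem, hEdef]
  have hEprod : ∏ i ∈ E, (Xs i * Ys i * Zs i)
      = (∏ i ∈ E, Xs i) * ((∏ i ∈ E, Ys i) * (∏ i ∈ E, Zs i)) := by
    rw [Finset.prod_mul_distrib, Finset.prod_mul_distrib, mul_assoc]
  have hPN : Pfs.card * ((Xs i0 * Ys i0 * Zs i0) * (Xs i2 * Ys i2 * Zs i2))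
      = ∏ i, Xs i * Ys i * Zs i := by
    rw [hPfscard, hNsplit, hEprod]
    ring
  -- total bound in ℝ
  have h𝒯R : ((𝒯.card : ℕ) : ℝ) ≤
      (Pfs.card : ℝ) * ((262144 * ((A:ℝ) * Bq * Cq) / X + 32) * (Tb:ℝ) ^ 3) := by
    rw [hsum]
    push_cast
    calc ∑ r ∈ Pfs, ((𝒯.filter (fun t => rmk t = r)).card : ℝ)
        ≤ ∑ _r ∈ Pfs, ((262144 * ((A:ℝ) * Bq * Cq) / X + 32) * (Tb:ℝ) ^ 3) :=
          Finset.sum_le_sum hfibbound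
      _ = (Pfs.card : ℝ) * ((262144 * ((A:ℝ) * Bq * Cq) / X + 32) * (Tb:ℝ) ^ 3) := by
          rw [Finset.sum_const, nsmul_eq_mul]
  -- abbreviations for the final computation
  set p1 : ℝ := ((Xs i0 * Ys i0 * Zs i0 : ℕ) : ℝ) with hp1def
  set p3 : ℝ := ((Xs i2 * Ys i2 * Zs i2 : ℕ) : ℝ) with hp3def
  set nR : ℝ := ((∏ i, Xs i * Ys i * Zs i : ℕ) : ℝ) with hnRdef
  have hp1pos : 0 < p1 := by
    rw [hp1def]
    have : 0 < Xs i0 * Ys i0 * Zs i0 :=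
      Nat.mul_pos (Nat.mul_pos (hXs i0) (hYs i0)) (hZs i0)
    exact_mod_cast this
  have hp3pos : 0 < p3 := by
    rw [hp3def]
    have : 0 < Xs i2 * Ys i2 * Zs i2 :=
      Nat.mul_pos (Nat.mul_pos (hXs i2) (hYs i2)) (hZs i2)
    exact_mod_cast this
  have hQm : (Pfs.card : ℝ) * (p1 * p3) = nR := by
    rw [hp1def, hp3def, hnRdef]
    exact_mod_cast congrArg (fun m : ℕ => (m : ℝ)) hPN
  have hABC : (A:ℝ) * Bq * Cq = p1 * p3 ^ 3 := by
    rw [hAdef, hBqdef, hCqdef, hp1def, hp3def]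
    push_cast
    ring
  have hT3 : (Tb:ℝ) ^ 3 ≤ K₁ ^ 3 * X ^ ε := by
    have hTb1 : (Tb:ℝ) ≤ K₁ * X ^ δ := by
      rw [hTbdef]
      calc ((⌊K * ((2:ℝ) ^ (σ + 1) * X) ^ δ⌋₊ : ℕ) : ℝ) ≤ K * ((2:ℝ) ^ (σ + 1) * X) ^ δ :=
            Nat.floor_le (by positivity)
        _ = K * (((2:ℝ) ^ (σ + 1)) ^ δ * X ^ δ) := by
            rw [Real.mul_rpow (by positivity) (le_of_lt hX0)]
        _ ≤ K * (((2:ℝ) ^ (σ + 1)) * X ^ δ) := by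
            apply mul_le_mul_of_nonneg_left _ (by linarith)
            apply mul_le_mul_of_nonneg_right _ (by positivity)
            calc ((2:ℝ) ^ (σ + 1)) ^ δ ≤ ((2:ℝ) ^ (σ + 1)) ^ (1:ℝ) := by
                  apply Real.rpow_le_rpow_of_exponent_le _ hδle1
                  exact one_le_pow₀ (by norm_num)
              _ = (2:ℝ) ^ (σ + 1) := Real.rpow_one _
        _ = K₁ * X ^ δ := by rw [hK₁def]; ring
    have hTbnn : (0:ℝ) ≤ (Tb:ℝ) := Nat.cast_nonneg _
    calc (Tb:ℝ) ^ 3 ≤ (K₁ * X ^ δ) ^ 3 := by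
          apply pow_le_pow_left₀ hTbnn hTb1
      _ = K₁ ^ 3 * (X ^ δ) ^ (3:ℕ) := by ring
      _ = K₁ ^ 3 * X ^ (δ * 3) := by
          rw [← Real.rpow_natCast (X ^ δ) 3, ← Real.rpow_mul (le_of_lt hX0)]
          norm_num
      _ ≤ K₁ ^ 3 * X ^ ε := by
          apply mul_le_mul_of_nonneg_left _ (by positivity)
          apply Real.rpow_le_rpow_of_exponent_le hX
          linarith
  have hrw1 : X ^ (lam - 1 + ε) = X ^ lam * X ^ ε / X := by
    have h : lam - 1 + ε = (lam + ε) - 1 := by ring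
    rw [h, Real.rpow_sub hX0, Real.rpow_one, Real.rpow_add hX0]
  have hrw2 : X ^ (lam + ε) = X ^ lam * X ^ ε := Real.rpow_add hX0 _ _
  have hQ : (Pfs.card : ℝ) = nR / (p1 * p3) := by
    rw [eq_div_iff (by positivity)]
    exact hQm
  have hnRnn : (0:ℝ) ≤ nR := by rw [hnRdef]; positivity
  have hT3nn : (0:ℝ) ≤ (Tb:ℝ) ^ 3 := by positivity
  have hK₁3 : (0:ℝ) < K₁ ^ 3 * X ^ ε := by positivity
  -- decompose the product
  have hsplitfinal : (Pfs.card : ℝ) * ((262144 * ((A:ℝ) * Bq * Cq) / X + 32) * (Tb:ℝ) ^ 3)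
      = 262144 * (nR * p3 ^ 2) / X * (Tb:ℝ) ^ 3 + 32 * (nR / (p1 * p3)) * (Tb:ℝ) ^ 3 := by
    rw [hABC, hQ]
    have hp1ne : p1 ≠ 0 := ne_of_gt hp1pos
    have hp3ne : p3 ≠ 0 := ne_of_gt hp3pos
    field_simp
  have hterm1 : 262144 * (nR * p3 ^ 2) / X * (Tb:ℝ) ^ 3
      ≤ 524288 * K₁ ^ 3 * (X ^ (lam - 1 + ε) * p3 ^ 2) := by
    calc 262144 * (nR * p3 ^ 2) / X * (Tb:ℝ) ^ 3
        ≤ 262144 * ((2 * X ^ lam) * p3 ^ 2) / X * (K₁ ^ 3 * X ^ ε) := by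
          gcongr
      _ = 524288 * K₁ ^ 3 * ((X ^ lam * X ^ ε / X) * p3 ^ 2) := by ring
      _ = 524288 * K₁ ^ 3 * (X ^ (lam - 1 + ε) * p3 ^ 2) := by rw [hrw1]
  have hterm2 : 32 * (nR / (p1 * p3)) * (Tb:ℝ) ^ 3
      ≤ 64 * K₁ ^ 3 * (X ^ (lam + ε) / (p1 * p3)) := by
    calc 32 * (nR / (p1 * p3)) * (Tb:ℝ) ^ 3
        ≤ 32 * ((2 * X ^ lam) / (p1 * p3)) * (K₁ ^ 3 * X ^ ε) := by gcongr
      _ = 64 * K₁ ^ 3 * ((X ^ lam * X ^ ε) / (p1 * p3)) := by ring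
      _ = 64 * K₁ ^ 3 * (X ^ (lam + ε) / (p1 * p3)) := by rw [hrw2]
  have hBfinal : (B d c₁ c₂ c₃ Xs Ys Zs : ℝ) ≤ (𝒯.card : ℝ) := by exact_mod_cast hB𝒯
  have hge1 : (0:ℝ) ≤ X ^ (lam + ε) / (p1 * p3) := by positivity
  have hge2 : (0:ℝ) ≤ X ^ (lam - 1 + ε) * p3 ^ 2 := by positivity
  have hK₁3nn : (0:ℝ) ≤ K₁ ^ 3 := by positivity
  have hfinal1 : (B d c₁ c₂ c₃ Xs Ys Zs : ℝ)
      ≤ 524288 * K₁ ^ 3 * (X ^ (lam + ε) / (p1 * p3) + X ^ (lam - 1 + ε) * p3 ^ 2) := by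
    calc (B d c₁ c₂ c₃ Xs Ys Zs : ℝ) ≤ (𝒯.card : ℝ) := hBfinal
      _ ≤ (Pfs.card : ℝ) * ((262144 * ((A:ℝ) * Bq * Cq) / X + 32) * (Tb:ℝ) ^ 3) := h𝒯R
      _ = 262144 * (nR * p3 ^ 2) / X * (Tb:ℝ) ^ 3 + 32 * (nR / (p1 * p3)) * (Tb:ℝ) ^ 3 :=
          hsplitfinal
      _ ≤ 524288 * K₁ ^ 3 * (X ^ (lam - 1 + ε) * p3 ^ 2)
          + 64 * K₁ ^ 3 * (X ^ (lam + ε) / (p1 * p3)) := add_le_add hterm1 hterm2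
      _ ≤ 524288 * K₁ ^ 3 * (X ^ (lam + ε) / (p1 * p3) + X ^ (lam - 1 + ε) * p3 ^ 2) := by
          nlinarith [hge1, hge2, hK₁3nn]
  show (B d c₁ c₂ c₃ Xs Ys Zs : ℝ) ≤ 524288 * K₁ ^ 3 *
      (X ^ (lam + ε) / (((Xs i0 * Ys i0 * Zs i0) * (Xs i2 * Ys i2 * Zs i2) : ℕ) : ℝ)
        + X ^ (lam - 1 + ε) * ((Xs i2 * Ys i2 * Zs i2 : ℕ) : ℝ) ^ 2)
  have hcast1 : (((Xs i0 * Ys i0 * Zs i0) * (Xs i2 * Ys i2 * Zs i2) : ℕ) : ℝ) = p1 * p3 := by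
    rw [hp1def, hp3def]
    push_cast
    ring
  have hcast2 : ((Xs i2 * Ys i2 * Zs i2 : ℕ) : ℝ) = p3 := by rw [hp3def]
  rw [hcast1, hcast2]
  exact hfinal1
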